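/- Over an arbitrary commutative ring K, the ring of multisymmetric functions K[V^m]^{S_n} is generated as a K-algebra by the elements σ_r(w) for r ∈ {1,...,n} and w a nonempty monomial in x(1),...,x(m). -/

import Mathlib

open MvPolynomial

/-- `σ_r(w)`: the `r`-th elementary symmetric polynomial of the substitutions
`w_{⟨1⟩}, …, w_{⟨n⟩}` of the monomial `w = x(1)^{a 1} ⋯ x(m)^{a m}`. -/
noncomputable def sigmaMon (K : Type*) [CommRing K] (m n : ℕ) (r : ℕ) (a : Fin m → ℕ) :
    MvPolynomial (Fin m × Fin n) K :=
  ∑ S ∈ Finset.univ.powersetCard r, ∏ j ∈ S, ∏ i : Fin m, X (i, j) ^ a i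

/-- `f` is invariant under the `S_n`-action permuting the index `j`. -/
def IsMultiSymm {K : Type*} [CommRing K] {m n : ℕ} (f : MvPolynomial (Fin m × Fin n) K) :
    Prop :=
  ∀ σ : Equiv.Perm (Fin n), rename (fun p : Fin m × Fin n => (p.1, σ p.2)) f = f

noncomputable section MSAux

variable {K : Type*} [CommRing K] {m n : ℕ}

/-- The column monomial `w` substituted in column `j`. -/
def msCol (K : Type*) [CommRing K] {m n : ℕ} (w : Fin m → ℕ) (j : Fin n) :
    MvPolynomial (Fin m × Fin n) K :=
  ∏ i : Fin m, X (i, j) ^ w i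

/-- Exponent finsupp of a column configuration. -/
def msDex (m n : ℕ) (ν : Fin n → Fin m → ℕ) : (Fin m × Fin n) →₀ ℕ :=
  Finsupp.equivFunOnFinite.symm fun p => ν p.2 p.1

/-- Monomial of a column configuration. -/
def msMon (K : Type*) [CommRing K] {m n : ℕ} (ν : Fin n → Fin m → ℕ) :
    MvPolynomial (Fin m × Fin n) K :=
  ∏ j : Fin n, msCol K (ν j) j

/-- The orbit of a configuration under column permutations. -/
def msOrb (m n : ℕ) (μ : Fin n → Fin m → ℕ) : Finset (Fin n → Fin m → ℕ) :=
  Finset.image (fun τ : Equiv.Perm (Fin n) => μ ∘ τ) Finset.univ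

/-- Monomial multisymmetric polynomial: orbit sum. -/
def msSym (K : Type*) [CommRing K] (m n : ℕ) (μ : Fin n → Fin m → ℕ) :
    MvPolynomial (Fin m × Fin n) K :=
  ∑ ν ∈ msOrb m n μ, msMon K ν

lemma msDex_injective : Function.Injective (msDex m n) := by
  intro ν ν' h
  funext j i
  have := congrArg (fun d => (Finsupp.equivFunOnFinite d) (i, j)) h
  simpa [msDex] using this

lemma msDex_apply (ν : Fin n → Fin m → ℕ) (p : Fin m × Fin n) :
    msDex m n ν p = ν p.2 p.1 := by
  simp [msDex]

lemma msCol_zero (j : Fin n) : msCol K (0 : Fin m → ℕ) j = 1 := by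
  simp [msCol]

lemma msCol_add (w w' : Fin m → ℕ) (j : Fin n) :
    msCol K (w + w') j = msCol K w j * msCol K w' j := by
  simp [msCol, pow_add, Finset.prod_mul_distrib]

lemma msCol_sum {α : Type*} (s : Finset α) (f : α → Fin m → ℕ) (j : Fin n) :
    msCol K (∑ w ∈ s, f w) j = ∏ w ∈ s, msCol K (f w) j := by
  classical
  induction s using Finset.induction with
  | empty => simp [msCol_zero]
  | insert a s hx ih => rw [Finset.sum_insert hx, Finset.prod_insert hx, msCol_add, ih]

lemma msMon_eq_monomial (ν : Fin n → Fin m → ℕ) :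
    msMon K ν = monomial (msDex m n ν) (1 : K) := by
  classical
  rw [← prod_X_pow_eq_monomial]
  rw [Finset.prod_subset (Finset.subset_univ (msDex m n ν).support)
      (fun p _ hp => by
        rw [Finsupp.notMem_support_iff] at hp
        rw [hp, pow_zero])]
  rw [Fintype.prod_prod_type (f := fun p : Fin m × Fin n => X p ^ (msDex m n ν) p)]
  rw [Finset.prod_comm]
  apply Finset.prod_congr rfl
  intro j _
  apply Finset.prod_congr rfl
  intro i _
  rw [msDex_apply]

lemma msRename_injective (σ : Equiv.Perm (Fin n)) :
    Function.Injective (fun p : Fin m × Fin n => (p.1, σ p.2)) := by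
  intro p q h
  obtain ⟨h1, h2⟩ := Prod.mk.injEq .. ▸ h
  exact Prod.ext h1 (σ.injective h2)

lemma rename_msCol (σ : Equiv.Perm (Fin n)) (w : Fin m → ℕ) (j : Fin n) :
    rename (fun p : Fin m × Fin n => (p.1, σ p.2)) (msCol K w j) = msCol K w (σ j) := by
  simp [msCol]

lemma rename_msMon (σ : Equiv.Perm (Fin n)) (ν : Fin n → Fin m → ℕ) :
    rename (fun p : Fin m × Fin n => (p.1, σ p.2)) (msMon K ν) = msMon K (ν ∘ σ.symm) := by
  rw [msMon, map_prod]
  simp_rw [rename_msCol]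
  rw [msMon]
  apply Fintype.prod_equiv σ
  intro j
  simp

lemma comp_mem_msOrb {μ ν : Fin n → Fin m → ℕ} (h : ν ∈ msOrb m n μ) (σ : Equiv.Perm (Fin n)) :
    ν ∘ σ ∈ msOrb m n μ := by
  rw [msOrb, Finset.mem_image] at h ⊢
  obtain ⟨τ, _, rfl⟩ := h
  exact ⟨σ.trans τ, Finset.mem_univ _, by funext j; simp⟩

lemma isMultiSymm_msSym (μ : Fin n → Fin m → ℕ) : IsMultiSymm (msSym K m n μ) := by
  intro σ
  rw [msSym, map_sum]
  simp_rw [rename_msMon]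
  apply Finset.sum_nbij' (i := fun ν => ν ∘ ⇑σ.symm) (j := fun ν => ν ∘ ⇑σ)
  · intro ν hν; exact comp_mem_msOrb hν σ.symm
  · intro ν hν; exact comp_mem_msOrb hν σ
  · intro ν _; funext j; simp
  · intro ν _; funext j; simp
  · intro ν _; rfl

lemma coeff_msSym (μ : Fin n → Fin m → ℕ) (e : (Fin m × Fin n) →₀ ℕ) :
    coeff e (msSym K m n μ) = if e ∈ (msOrb m n μ).image (msDex m n) then 1 else 0 := by
  classical
  rw [msSym]
  simp_rw [msMon_eq_monomial, MvPolynomial.coeff_sum, coeff_monomial]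
  by_cases he : e ∈ (msOrb m n μ).image (msDex m n)
  · rw [if_pos he]
    obtain ⟨ν0, hν0, hde⟩ := Finset.mem_image.mp he
    rw [Finset.sum_eq_single_of_mem ν0 hν0
      (fun x _ hx => if_neg (fun h => hx (msDex_injective (h.trans hde.symm))))]
    rw [if_pos hde]
  · rw [if_neg he]
    apply Finset.sum_eq_zero
    intro x hx
    exact if_neg (fun h => he (Finset.mem_image.mpr ⟨x, hx, h⟩))

lemma coeff_comp_perm {f : MvPolynomial (Fin m × Fin n) K} (hf : IsMultiSymm f)
    (ν : Fin n → Fin m → ℕ) (τ : Equiv.Perm (Fin n)) :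
    coeff (msDex m n (ν ∘ τ)) f = coeff (msDex m n ν) f := by
  classical
  have h := hf τ.symm
  have key := coeff_rename_mapDomain (fun p : Fin m × Fin n => (p.1, τ.symm p.2))
      (msRename_injective τ.symm) f (msDex m n ν)
  rw [h] at key
  rw [← key]
  congr 1
  ext p
  obtain ⟨i, j⟩ := p
  have : ((i, j) : Fin m × Fin n) = (fun p : Fin m × Fin n => (p.1, τ.symm p.2)) (i, τ j) := by
    simp
  rw [this, Finsupp.mapDomain_apply (msRename_injective τ.symm)]
  simp [msDex_apply]

lemma msDex_of_finsupp (d : (Fin m × Fin n) →₀ ℕ) :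
    msDex m n (fun j i => d (i, j)) = d := by
  ext p
  rw [msDex_apply]

lemma self_mem_msOrb (μ : Fin n → Fin m → ℕ) : μ ∈ msOrb m n μ :=
  Finset.mem_image.mpr ⟨Equiv.refl _, Finset.mem_univ _, rfl⟩

lemma invariant_mem_span (f : MvPolynomial (Fin m × Fin n) K) (hf : IsMultiSymm f) :
    f ∈ Submodule.span K
      {g : MvPolynomial (Fin m × Fin n) K |
        ∃ ν, msDex m n ν ∈ f.support ∧ g = msSym K m n ν} := by
  classical
  obtain ⟨N, hN⟩ : ∃ N, f.support.card ≤ N := ⟨f.support.card, le_rfl⟩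
  induction N generalizing f with
  | zero =>
    have : f = 0 := by
      rw [← support_eq_empty, ← Finset.card_eq_zero]; omega
    rw [this]; exact Submodule.zero_mem _
  | succ N ih =>
    by_cases h0 : f.support = ∅
    · rw [support_eq_empty.mp h0]; exact Submodule.zero_mem _
    · obtain ⟨d, hd⟩ := Finset.nonempty_of_ne_empty h0
      set νd : Fin n → Fin m → ℕ := fun j i => d (i, j) with hνd
      have hdd : msDex m n νd = d := msDex_of_finsupp d
      set c : K := coeff d f with hc
      set g : MvPolynomial (Fin m × Fin n) K := f - c • msSym K m n νd with hg
      -- coefficients of f on the orbit of d all equal c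
      have horb : ∀ e ∈ (msOrb m n νd).image (msDex m n), coeff e f = c := by
        intro e he
        obtain ⟨ν', hν', rfl⟩ := Finset.mem_image.mp he
        obtain ⟨τ, _, rfl⟩ := Finset.mem_image.mp hν'
        rw [coeff_comp_perm hf νd τ, hdd]
      have hsupp : g.support ⊆ f.support.erase d := by
        intro e he
        rw [mem_support_iff] at he
        have hge : coeff e g = coeff e f - c * coeff e (msSym K m n νd) := by
          rw [hg, coeff_sub, coeff_smul, smul_eq_mul]
        by_cases hmem : e ∈ (msOrb m n νd).image (msDex m n)
        · exfalso
          rw [hge, coeff_msSym, if_pos hmem, mul_one, horb e hmem, sub_self] at he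
          exact he rfl
        · have : coeff e g = coeff e f := by
            rw [hge, coeff_msSym, if_neg hmem, mul_zero, sub_zero]
          refine Finset.mem_erase.mpr ⟨?_, mem_support_iff.mpr (this ▸ he)⟩
          rintro rfl
          exact hmem (Finset.mem_image.mpr ⟨νd, self_mem_msOrb νd, hdd⟩)
      have hcard : g.support.card ≤ N := by
        have := Finset.card_le_card hsupp
        have hlt := Finset.card_erase_lt_of_mem hd
        omega
      have hginv : IsMultiSymm g := by
        intro σ
        rw [hg, map_sub, hf σ, map_smul, isMultiSymm_msSym νd σ]
      have hgspan := ih g hginv hcard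
      have hmono : {h : MvPolynomial (Fin m × Fin n) K |
            ∃ ν, msDex m n ν ∈ g.support ∧ h = msSym K m n ν} ⊆
          {h : MvPolynomial (Fin m × Fin n) K |
            ∃ ν, msDex m n ν ∈ f.support ∧ h = msSym K m n ν} := by
        rintro h ⟨ν, hν, rfl⟩
        exact ⟨ν, Finset.mem_of_mem_erase (hsupp hν), rfl⟩
      have hsum : f = g + c • msSym K m n νd := by rw [hg]; ring
      have hmem2 : g + c • msSym K m n νd ∈ Submodule.span K
          {h : MvPolynomial (Fin m × Fin n) K |
            ∃ ν, msDex m n ν ∈ f.support ∧ h = msSym K m n ν} :=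
        Submodule.add_mem _ (Submodule.span_mono hmono hgspan)
          (Submodule.smul_mem _ _ (Submodule.subset_span ⟨νd, hdd.symm ▸ hd, rfl⟩))
      exact hsum.symm ▸ hmem2

lemma exists_perm_of_fibers {α β : Type*} [Fintype α] [DecidableEq α] [DecidableEq β]
    (f g : α → β)
    (h : ∀ b, (Finset.univ.filter fun a => f a = b).card
            = (Finset.univ.filter fun a => g a = b).card) :
    ∃ τ : Equiv.Perm α, f ∘ τ = g := by
  have hc : ∀ b, Fintype.card {a // g a = b} = Fintype.card {a // f a = b} := by
    intro b
    rw [Fintype.card_subtype, Fintype.card_subtype]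
    exact (h b).symm
  let e : ∀ b, {a // g a = b} ≃ {a // f a = b} := fun b => Fintype.equivOfCardEq (hc b)
  exact ⟨Equiv.ofFiberEquiv e, funext fun a => Equiv.ofFiberEquiv_map e a⟩

/-- The finset of nonzero values of `μ`. -/
def msV {m n : ℕ} (μ : Fin n → Fin m → ℕ) : Finset (Fin m → ℕ) :=
  (Finset.image μ Finset.univ).filter (fun w => w ≠ 0)

/-- Multiplicity of the value `w` among the columns of `μ`. -/
def msR {m n : ℕ} (μ : Fin n → Fin m → ℕ) (w : Fin m → ℕ) : ℕ :=
  (Finset.univ.filter fun j => μ j = w).card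

variable {μ : Fin n → Fin m → ℕ}

/-- For `p` a choice of a finset of columns for each value in `V`, the set of values whose
finset contains column `j`. -/
def msFj (V : Finset (Fin m → ℕ)) (p : (a : Fin m → ℕ) → a ∈ V → Finset (Fin n))
    (j : Fin n) : Finset {x // x ∈ V} :=
  V.attach.filter (fun w => j ∈ p w.1 w.2)

/-- The column configuration determined by `p`. -/
def msNu (V : Finset (Fin m → ℕ)) (p : (a : Fin m → ℕ) → a ∈ V → Finset (Fin n)) :
    Fin n → Fin m → ℕ :=
  fun j => ∑ w ∈ msFj V p j, w.1

lemma prod_sigmaMon_expand (K : Type*) [CommRing K] (m n : ℕ) (μ : Fin n → Fin m → ℕ) :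
    ∏ w ∈ msV μ, sigmaMon K m n (msR μ w) w
      = ∑ p ∈ (msV μ).pi (fun w => Finset.univ.powersetCard (msR μ w)),
          msMon K (msNu (msV μ) p) := by
  classical
  have h1 : ∀ w ∈ msV μ, sigmaMon K m n (msR μ w) w
      = ∑ S ∈ Finset.univ.powersetCard (msR μ w), ∏ j ∈ S, msCol K w j := by
    intro w _; rfl
  rw [Finset.prod_congr rfl h1, Finset.prod_sum]
  apply Finset.sum_congr rfl
  intro p hp
  have h2 : ∀ x : {a // a ∈ msV μ}, ∏ j ∈ p x.1 x.2, msCol K x.1 j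
      = ∏ j : Fin n, if j ∈ p x.1 x.2 then msCol K x.1 j else 1 := by
    intro x
    rw [Finset.prod_ite_mem Finset.univ (p x.1 x.2) (fun j => msCol K x.1 j),
      Finset.univ_inter]
  calc ∏ x ∈ (msV μ).attach, ∏ j ∈ p x.1 x.2, msCol K x.1 j
      = ∏ x ∈ (msV μ).attach, ∏ j : Fin n, if j ∈ p x.1 x.2 then msCol K x.1 j else 1 := by
        exact Finset.prod_congr rfl (fun x _ => h2 x)
    _ = ∏ j : Fin n, ∏ x ∈ (msV μ).attach, if j ∈ p x.1 x.2 then msCol K x.1 j else 1 :=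
        Finset.prod_comm
    _ = ∏ j : Fin n, msCol K (msNu (msV μ) p j) j := by
        apply Finset.prod_congr rfl
        intro j _
        rw [msNu, msCol_sum, msFj, Finset.prod_filter]
    _ = msMon K (msNu (msV μ) p) := rfl

lemma msNu_eq_of_mem {V : Finset (Fin m → ℕ)} {p : (a : Fin m → ℕ) → a ∈ V → Finset (Fin n)}
    (hgood : ∀ j, (msFj V p j).card ≤ 1) {j : Fin n} {w : Fin m → ℕ} (hw : w ∈ V)
    (hj : j ∈ p w hw) : msNu V p j = w := by
  classical
  have hmem : (⟨w, hw⟩ : {x // x ∈ V}) ∈ msFj V p j := by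
    rw [msFj, Finset.mem_filter]
    exact ⟨Finset.mem_attach _ _, hj⟩
  have hsing : msFj V p j = {⟨w, hw⟩} := by
    apply Finset.eq_singleton_iff_unique_mem.mpr
    exact ⟨hmem, fun x hx => Finset.card_le_one.mp (hgood j) x hx _ hmem⟩
  rw [msNu, hsing, Finset.sum_singleton]

lemma msNu_eq_zero_of_empty {V : Finset (Fin m → ℕ)}
    {p : (a : Fin m → ℕ) → a ∈ V → Finset (Fin n)} {j : Fin n}
    (h : msFj V p j = ∅) : msNu V p j = 0 := by
  rw [msNu, h, Finset.sum_empty]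

lemma msNu_cases {V : Finset (Fin m → ℕ)} {p : (a : Fin m → ℕ) → a ∈ V → Finset (Fin n)}
    (hgood : ∀ j, (msFj V p j).card ≤ 1) (j : Fin n) :
    (msNu V p j = 0 ∧ msFj V p j = ∅) ∨
      ∃ w, ∃ hw : w ∈ V, j ∈ p w hw ∧ msNu V p j = w := by
  classical
  by_cases h : msFj V p j = ∅
  · exact Or.inl ⟨msNu_eq_zero_of_empty h, h⟩
  · obtain ⟨⟨w, hw⟩, hmem⟩ := Finset.nonempty_of_ne_empty h
    rw [msFj, Finset.mem_filter] at hmem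
    exact Or.inr ⟨w, hw, hmem.2, msNu_eq_of_mem hgood hw hmem.2⟩

lemma mem_of_msNu_eq {V : Finset (Fin m → ℕ)} {p : (a : Fin m → ℕ) → a ∈ V → Finset (Fin n)}
    (hgood : ∀ j, (msFj V p j).card ≤ 1) {j : Fin n} {w : Fin m → ℕ} (hw : w ∈ V)
    (hne : w ≠ 0) (h : msNu V p j = w) : j ∈ p w hw := by
  rcases msNu_cases hgood j with ⟨h0, _⟩ | ⟨w', hw', hj, hval⟩
  · exact absurd (h0.symm.trans h) (Ne.symm hne)
  · have : w' = w := hval.symm.trans h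
    subst this
    exact hj

lemma zero_not_mem_msV : (0 : Fin m → ℕ) ∉ msV μ := by
  rw [msV, Finset.mem_filter]
  rintro ⟨-, h⟩; exact h rfl

lemma msV_ne_zero {w : Fin m → ℕ} (hw : w ∈ msV μ) : w ≠ 0 :=
  (Finset.mem_filter.mp hw).2

lemma msOrb_vals {ν : Fin n → Fin m → ℕ} (hν : ν ∈ msOrb m n μ) (j : Fin n) :
    ν j ∈ insert 0 (msV μ) := by
  obtain ⟨τ, -, rfl⟩ := Finset.mem_image.mp hν
  by_cases h : μ (τ j) = 0
  · rw [Function.comp_apply, h]; exact Finset.mem_insert_self _ _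
  · refine Finset.mem_insert_of_mem ?_
    rw [msV, Finset.mem_filter]
    exact ⟨Finset.mem_image.mpr ⟨τ j, Finset.mem_univ _, rfl⟩, h⟩

lemma msOrb_fiber_card {ν : Fin n → Fin m → ℕ} (hν : ν ∈ msOrb m n μ) (w : Fin m → ℕ) :
    (Finset.univ.filter fun j => ν j = w).card = msR μ w := by
  classical
  obtain ⟨τ, -, rfl⟩ := Finset.mem_image.mp hν
  rw [msR]
  apply Finset.card_bij' (fun j _ => τ j) (fun j _ => τ.symm j)
  · intro a ha
    rw [Finset.mem_filter] at ha ⊢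
    exact ⟨Finset.mem_univ _, ha.2⟩
  · intro a ha
    rw [Finset.mem_filter] at ha ⊢
    refine ⟨Finset.mem_univ _, ?_⟩
    simpa using ha.2
  · intro a _; simp
  · intro a _; simp

lemma good_fiber_eq {p : (a : Fin m → ℕ) → a ∈ msV μ → Finset (Fin n)}
    (hgood : ∀ j, (msFj (msV μ) p j).card ≤ 1) {w : Fin m → ℕ} (hw : w ∈ msV μ) :
    Finset.univ.filter (fun j => msNu (msV μ) p j = w) = p w hw := by
  ext j
  rw [Finset.mem_filter]
  constructor
  · rintro ⟨-, hj⟩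
    exact mem_of_msNu_eq hgood hw (msV_ne_zero hw) hj
  · intro hj
    exact ⟨Finset.mem_univ _, msNu_eq_of_mem hgood hw hj⟩

lemma good_nu_vals {p : (a : Fin m → ℕ) → a ∈ msV μ → Finset (Fin n)}
    (hgood : ∀ j, (msFj (msV μ) p j).card ≤ 1) (j : Fin n) :
    msNu (msV μ) p j ∈ insert 0 (msV μ) := by
  rcases msNu_cases hgood j with ⟨h0, -⟩ | ⟨w, hw, -, hval⟩
  · rw [h0]; exact Finset.mem_insert_self _ _
  · rw [hval]; exact Finset.mem_insert_of_mem hw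

lemma good_fibers {p : (a : Fin m → ℕ) → a ∈ msV μ → Finset (Fin n)}
    (hp : p ∈ (msV μ).pi fun w => Finset.univ.powersetCard (msR μ w))
    (hgood : ∀ j, (msFj (msV μ) p j).card ≤ 1) (b : Fin m → ℕ) :
    (Finset.univ.filter fun j => msNu (msV μ) p j = b).card = msR μ b := by
  classical
  by_cases hb : b ∈ msV μ
  · rw [good_fiber_eq hgood hb]
    exact (Finset.mem_powersetCard.mp (Finset.mem_pi.mp hp b hb)).2
  · by_cases hb0 : b = 0
    · subst hb0
      have h1 := Finset.card_eq_sum_card_fiberwise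
        (f := fun j : Fin n => msNu (msV μ) p j) (t := insert 0 (msV μ))
        (s := Finset.univ) (fun j _ => good_nu_vals hgood j)
      have h2 := Finset.card_eq_sum_card_fiberwise
        (f := μ) (t := insert 0 (msV μ))
        (s := Finset.univ) (fun j _ => msOrb_vals (self_mem_msOrb μ) j)
      rw [Finset.sum_insert zero_not_mem_msV] at h1 h2
      have h3 : ∀ w ∈ msV μ,
          (Finset.univ.filter fun j => msNu (msV μ) p j = w).card
            = (Finset.univ.filter fun j => μ j = w).card := by
        intro w hw
        rw [good_fiber_eq hgood hw]
        exact (Finset.mem_powersetCard.mp (Finset.mem_pi.mp hp w hw)).2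
      rw [Finset.sum_congr rfl h3] at h1
      beta_reduce at h1 h2
      rw [msR]
      omega
    · have he1 : (Finset.univ.filter fun j => msNu (msV μ) p j = b) = ∅ := by
        apply Finset.filter_eq_empty_iff.mpr
        intro j _ hj
        rcases Finset.mem_insert.mp (hj ▸ good_nu_vals hgood j) with h | h
        · exact hb0 h
        · exact hb h
      have he2 : (Finset.univ.filter fun j => μ j = b) = ∅ := by
        apply Finset.filter_eq_empty_iff.mpr
        intro j _ hj
        rcases Finset.mem_insert.mp (hj ▸ msOrb_vals (self_mem_msOrb μ) j) with h | h
        · exact hb0 h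
        · exact hb h
      rw [he1, msR, he2]

lemma sum_good_eq_msSym (K : Type*) [CommRing K] (m n : ℕ) (μ : Fin n → Fin m → ℕ) :
    ∑ p ∈ ((msV μ).pi fun w => Finset.univ.powersetCard (msR μ w)).filter
        (fun p => ∀ j, (msFj (msV μ) p j).card ≤ 1),
      msMon K (msNu (msV μ) p) = msSym K m n μ := by
  classical
  rw [msSym]
  apply Finset.sum_nbij' (i := fun p => msNu (msV μ) p)
    (j := fun ν => fun w _ => Finset.univ.filter fun j => ν j = w)
  · -- forward membership
    intro p hp
    obtain ⟨hpi, hgood⟩ := Finset.mem_filter.mp hp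
    obtain ⟨τ, hτ⟩ := exists_perm_of_fibers μ (msNu (msV μ) p)
      (fun b => by rw [good_fibers hpi hgood b, msR])
    exact Finset.mem_image.mpr ⟨τ, Finset.mem_univ _, hτ⟩
  · -- backward membership
    intro ν hν
    rw [Finset.mem_filter]
    constructor
    · rw [Finset.mem_pi]
      intro w hw
      rw [Finset.mem_powersetCard]
      exact ⟨Finset.subset_univ _, msOrb_fiber_card hν w⟩
    · intro j
      rw [Finset.card_le_one]
      intro x hx y hy
      rw [msFj, Finset.mem_filter] at hx hy
      have hx2 := (Finset.mem_filter.mp hx.2).2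
      have hy2 := (Finset.mem_filter.mp hy.2).2
      exact Subtype.ext (hx2 ▸ hy2 ▸ rfl)
  · -- left inverse
    intro p hp
    obtain ⟨hpi, hgood⟩ := Finset.mem_filter.mp hp
    funext w hw
    exact good_fiber_eq hgood hw
  · -- right inverse
    intro ν hν
    funext j
    set p : (a : Fin m → ℕ) → a ∈ msV μ → Finset (Fin n) :=
      fun w _ => Finset.univ.filter fun j => ν j = w with hpdef
    have hgood : ∀ j, (msFj (msV μ) p j).card ≤ 1 := by
      intro j'
      rw [Finset.card_le_one]
      intro x hx y hy
      rw [msFj, Finset.mem_filter, hpdef] at hx hy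
      have hx2 := (Finset.mem_filter.mp hx.2).2
      have hy2 := (Finset.mem_filter.mp hy.2).2
      exact Subtype.ext (hx2 ▸ hy2 ▸ rfl)
    rcases Finset.mem_insert.mp (msOrb_vals hν j) with h0 | hV
    · -- ν j = 0
      have hempty : msFj (msV μ) p j = ∅ := by
        rw [msFj, Finset.filter_eq_empty_iff]
        intro x _
        rw [hpdef]
        intro hmem
        have := (Finset.mem_filter.mp hmem).2
        exact msV_ne_zero x.2 (this ▸ h0)
      rw [msNu_eq_zero_of_empty hempty, h0]
    · -- ν j ∈ msV μ
      have hj : j ∈ p (ν j) hV := by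
        rw [hpdef]
        exact Finset.mem_filter.mpr ⟨Finset.mem_univ _, rfl⟩
      exact msNu_eq_of_mem hgood hV hj
  · intro p _
    rfl

lemma msFj_card_sum {V : Finset (Fin m → ℕ)} (p : (a : Fin m → ℕ) → a ∈ V → Finset (Fin n)) :
    ∑ j : Fin n, (msFj V p j).card = ∑ w ∈ V.attach, (p w.1 w.2).card := by
  classical
  have h1 : ∀ j, ((msFj V p j).card : ℕ)
      = ∑ w ∈ V.attach, if j ∈ p w.1 w.2 then 1 else 0 := by
    intro j
    rw [msFj, Finset.sum_boole, Nat.cast_id]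
  simp_rw [h1]
  rw [Finset.sum_comm]
  apply Finset.sum_congr rfl
  intro w _
  rw [Finset.sum_boole, Nat.cast_id, Finset.filter_univ_mem]

lemma bad_nu_card {p : (a : Fin m → ℕ) → a ∈ msV μ → Finset (Fin n)}
    (hbad : ¬ ∀ j, (msFj (msV μ) p j).card ≤ 1) :
    (Finset.univ.filter fun j => msNu (msV μ) p j ≠ 0).card + 1
      ≤ ∑ w ∈ (msV μ).attach, (p w.1 w.2).card := by
  classical
  push_neg at hbad
  obtain ⟨j0, hj0⟩ := hbad
  rw [← msFj_card_sum p]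
  have hsub : (Finset.univ.filter fun j => msNu (msV μ) p j ≠ 0)
      ⊆ Finset.univ.filter fun j => 1 ≤ (msFj (msV μ) p j).card := by
    intro j hj
    rw [Finset.mem_filter] at hj ⊢
    refine ⟨Finset.mem_univ _, ?_⟩
    by_contra h
    have hc0 : msFj (msV μ) p j = ∅ := by
      rw [← Finset.card_eq_zero]; omega
    exact hj.2 (msNu_eq_zero_of_empty hc0)
  have h1 := Finset.card_le_card hsub
  have hj0F : j0 ∈ Finset.univ.filter fun j => 1 ≤ (msFj (msV μ) p j).card := by
    rw [Finset.mem_filter]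
    exact ⟨Finset.mem_univ _, by omega⟩
  have h2 : (Finset.univ.filter fun j => 1 ≤ (msFj (msV μ) p j).card).card
      ≤ ∑ j ∈ (Finset.univ.filter fun j => 1 ≤ (msFj (msV μ) p j).card).erase j0,
          (msFj (msV μ) p j).card + 1 := by
    have e1 : ((Finset.univ.filter fun j => 1 ≤ (msFj (msV μ) p j).card).erase j0).card
        = (Finset.univ.filter fun j => 1 ≤ (msFj (msV μ) p j).card).card - 1 :=
      Finset.card_erase_of_mem hj0F
    have e2 : ((Finset.univ.filter fun j => 1 ≤ (msFj (msV μ) p j).card).erase j0).card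
        ≤ ∑ j ∈ (Finset.univ.filter fun j => 1 ≤ (msFj (msV μ) p j).card).erase j0,
            (msFj (msV μ) p j).card := by
      rw [Finset.card_eq_sum_ones]
      exact Finset.sum_le_sum
        (fun j hj => (Finset.mem_filter.mp (Finset.mem_of_mem_erase hj)).2)
    have e3 : 1 ≤ (Finset.univ.filter fun j => 1 ≤ (msFj (msV μ) p j).card).card :=
      Finset.card_pos.mpr ⟨j0, hj0F⟩
    omega
  have h4 := Finset.add_sum_erase
    (Finset.univ.filter fun j => 1 ≤ (msFj (msV μ) p j).card)
    (fun j => (msFj (msV μ) p j).card) hj0F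
  beta_reduce at h4
  have h3 : ∑ j ∈ (Finset.univ.filter fun j => 1 ≤ (msFj (msV μ) p j).card),
      (msFj (msV μ) p j).card ≤ ∑ j : Fin n, (msFj (msV μ) p j).card :=
    Finset.sum_le_sum_of_subset (Finset.subset_univ _)
  omega

lemma isMultiSymm_sigmaMon (K : Type*) [CommRing K] (m n : ℕ) (r : ℕ) (a : Fin m → ℕ) :
    IsMultiSymm (sigmaMon K m n r a) := by
  classical
  intro σ
  rw [sigmaMon, map_sum]
  have hterm : ∀ S : Finset (Fin n),
      rename (fun p : Fin m × Fin n => (p.1, σ p.2))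
          ((∏ j ∈ S, ∏ i : Fin m, X (i, j) ^ a i : MvPolynomial (Fin m × Fin n) K))
        = ∏ j ∈ S.image σ, ∏ i : Fin m, X (i, j) ^ a i := by
    intro S
    have h1 : ∀ j : Fin n, (∏ i : Fin m, X (i, j) ^ a i : MvPolynomial (Fin m × Fin n) K)
        = msCol K a j := fun _ => rfl
    rw [map_prod]
    simp_rw [h1, rename_msCol]
    rw [Finset.prod_image (fun x _ y _ h => σ.injective h)]
  simp_rw [hterm]
  apply Finset.sum_nbij' (i := fun S => S.image σ) (j := fun S => S.image σ.symm)
  · intro S hS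
    rw [Finset.mem_powersetCard] at hS ⊢
    exact ⟨Finset.subset_univ _, by rw [Finset.card_image_of_injective _ σ.injective, hS.2]⟩
  · intro S hS
    rw [Finset.mem_powersetCard] at hS ⊢
    exact ⟨Finset.subset_univ _, by rw [Finset.card_image_of_injective _ σ.symm.injective, hS.2]⟩
  · intro S _
    rw [Finset.image_image]
    simp
  · intro S _
    rw [Finset.image_image]
    simp
  · intro S _
    rfl

lemma nonzero_card_eq_sum (μ : Fin n → Fin m → ℕ) :
    (Finset.univ.filter fun j => μ j ≠ 0).card = ∑ w ∈ msV μ, msR μ w := by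
  classical
  rw [Finset.card_eq_sum_card_fiberwise (f := μ) (t := msV μ)
    (fun j hj => by
      rw [msV, Finset.mem_coe, Finset.mem_filter]
      exact ⟨Finset.mem_image.mpr ⟨j, Finset.mem_univ _, rfl⟩, (Finset.mem_filter.mp (Finset.mem_coe.mp hj)).2⟩)]
  apply Finset.sum_congr rfl
  intro w hw
  rw [msR]
  congr 1
  ext j
  simp only [Finset.mem_filter, Finset.mem_univ, true_and]
  exact ⟨fun h => h.2, fun h => ⟨h ▸ msV_ne_zero hw, h⟩⟩

lemma pi_card_sum {p : (a : Fin m → ℕ) → a ∈ msV μ → Finset (Fin n)}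
    (hp : p ∈ (msV μ).pi fun w => Finset.univ.powersetCard (msR μ w)) :
    ∑ w ∈ (msV μ).attach, (p w.1 w.2).card = ∑ w ∈ msV μ, msR μ w := by
  rw [← Finset.sum_attach (msV μ) (fun w => msR μ w)]
  apply Finset.sum_congr rfl
  intro w _
  exact (Finset.mem_powersetCard.mp (Finset.mem_pi.mp hp w.1 w.2)).2

/-- The generating set of §σ_r(w)§'s. -/
def msGen (K : Type*) [CommRing K] (m n : ℕ) : Set (MvPolynomial (Fin m × Fin n) K) :=
  {f | ∃ r : ℕ, ∃ a : Fin m → ℕ, 1 ≤ r ∧ r ≤ n ∧ a ≠ 0 ∧ f = sigmaMon K m n r a}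

lemma msSym_mem_adjoin (K : Type*) [CommRing K] (m n : ℕ) (k : ℕ) :
    ∀ μ : Fin n → Fin m → ℕ, (Finset.univ.filter fun j => μ j ≠ 0).card ≤ k →
      msSym K m n μ ∈ Algebra.adjoin K (msGen K m n) := by
  classical
  induction k using Nat.strong_induction_on with
  | _ k IH =>
  intro μ hμ
  -- the product of the generators
  have hPmem : ∏ w ∈ msV μ, sigmaMon K m n (msR μ w) w ∈ Algebra.adjoin K (msGen K m n) := by
    apply Subalgebra.prod_mem
    intro w hw
    apply Algebra.subset_adjoin
    refine ⟨msR μ w, w, ?_, ?_, msV_ne_zero hw, rfl⟩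
    · rw [msR]
      apply Finset.card_pos.mpr
      obtain ⟨j, -, hj⟩ := Finset.mem_image.mp (Finset.mem_filter.mp hw).1
      exact ⟨j, Finset.mem_filter.mpr ⟨Finset.mem_univ _, hj⟩⟩
    · rw [msR]
      calc (Finset.univ.filter fun j => μ j = w).card
          ≤ (Finset.univ : Finset (Fin n)).card := Finset.card_filter_le _ _
        _ = n := by simp
  -- the bad sum
  set B : MvPolynomial (Fin m × Fin n) K :=
    ∑ p ∈ ((msV μ).pi fun w => Finset.univ.powersetCard (msR μ w)).filter
        (fun p => ¬ ∀ j, (msFj (msV μ) p j).card ≤ 1),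
      msMon K (msNu (msV μ) p) with hBdef
  have hsplit : msSym K m n μ + B = ∏ w ∈ msV μ, sigmaMon K m n (msR μ w) w := by
    rw [prod_sigmaMon_expand, ← sum_good_eq_msSym K m n μ, hBdef]
    exact Finset.sum_filter_add_sum_filter_not _ _ _
  -- B is invariant
  have hBinv : IsMultiSymm B := by
    intro σ
    have h1 : B = (∏ w ∈ msV μ, sigmaMon K m n (msR μ w) w) - msSym K m n μ := by
      rw [← hsplit]; ring
    rw [h1, map_sub, map_prod]
    rw [Finset.prod_congr rfl (fun w _ => isMultiSymm_sigmaMon K m n (msR μ w) w σ)]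
    rw [isMultiSymm_msSym μ σ]
  -- members of the support of B are small configurations
  have hBsupp : ∀ ν : Fin n → Fin m → ℕ, msDex m n ν ∈ B.support →
      (Finset.univ.filter fun j => ν j ≠ 0).card + 1 ≤ k := by
    intro ν hν
    rw [hBdef] at hν
    obtain ⟨p, hp, hmem⟩ := Finset.mem_biUnion.mp (MvPolynomial.support_sum hν)
    obtain ⟨hpi, hbad⟩ := Finset.mem_filter.mp hp
    rw [msMon_eq_monomial, MvPolynomial.mem_support_iff, coeff_monomial] at hmem
    have heq : msDex m n (msNu (msV μ) p) = msDex m n ν := by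
      by_contra h
      rw [if_neg h] at hmem
      exact hmem rfl
    have hνeq : ν = msNu (msV μ) p := (msDex_injective heq).symm
    have h1 := bad_nu_card (μ := μ) (p := p) hbad
    rw [pi_card_sum hpi, ← nonzero_card_eq_sum] at h1
    rw [hνeq]
    omega
  -- B is in the adjoin
  have hBmem : B ∈ Algebra.adjoin K (msGen K m n) := by
    have hspan := invariant_mem_span B hBinv
    have hsub : {g : MvPolynomial (Fin m × Fin n) K |
          ∃ ν, msDex m n ν ∈ B.support ∧ g = msSym K m n ν} ⊆
        (Subalgebra.toSubmodule (Algebra.adjoin K (msGen K m n)) :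
          Set (MvPolynomial (Fin m × Fin n) K)) := by
      rintro g ⟨ν, hν, rfl⟩
      have h1 := hBsupp ν hν
      exact IH ((Finset.univ.filter fun j => ν j ≠ 0).card) (by omega) ν le_rfl
    exact Submodule.span_le.mpr hsub hspan
  -- conclude
  have : msSym K m n μ = (∏ w ∈ msV μ, sigmaMon K m n (msR μ w) w) - B := by
    rw [← hsplit]; ring
  rw [this]
  exact Subalgebra.sub_mem _ hPmem hBmem

/-- The subalgebra of multisymmetric functions. -/
def msInv (K : Type*) [CommRing K] (m n : ℕ) : Subalgebra K (MvPolynomial (Fin m × Fin n) K) :=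
  ⨅ σ : Equiv.Perm (Fin n),
    AlgHom.equalizer (rename fun p : Fin m × Fin n => (p.1, σ p.2)) (AlgHom.id K _)

lemma mem_msInv {K : Type*} [CommRing K] {m n : ℕ} {f : MvPolynomial (Fin m × Fin n) K} :
    f ∈ msInv K m n ↔ IsMultiSymm f := by
  rw [msInv, Algebra.mem_iInf]
  rfl

end MSAux

/-- Over an arbitrary commutative ring `K`, the ring of multisymmetric functions
`K[V^m]^{S_n}` is generated as a `K`-algebra by the elements `σ_r(w)`, for
`1 ≤ r ≤ n` and `w` a nonempty monomial in `x(1), …, x(m)`. -/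
theorem multisymm_generated_by_sigma
    (K : Type*) [CommRing K] (m n : ℕ) :
    (Algebra.adjoin K {f : MvPolynomial (Fin m × Fin n) K |
        ∃ r : ℕ, ∃ a : Fin m → ℕ, 1 ≤ r ∧ r ≤ n ∧ a ≠ 0 ∧ f = sigmaMon K m n r a} :
      Set (MvPolynomial (Fin m × Fin n) K)) = {f | IsMultiSymm f} := by
  classical
  apply Set.Subset.antisymm
  · -- adjoin ⊆ invariants
    intro f hf
    have hle : Algebra.adjoin K (msGen K m n) ≤ msInv K m n := by
      apply Algebra.adjoin_le
      rintro g ⟨r, a, -, -, -, rfl⟩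
      exact mem_msInv.mpr (isMultiSymm_sigmaMon K m n r a)
    exact mem_msInv.mp (hle hf)
  · -- invariants ⊆ adjoin
    intro f hf
    have hspan := invariant_mem_span f hf
    have hsub : {g : MvPolynomial (Fin m × Fin n) K |
          ∃ ν, msDex m n ν ∈ f.support ∧ g = msSym K m n ν} ⊆
        (Subalgebra.toSubmodule (Algebra.adjoin K (msGen K m n)) :
          Set (MvPolynomial (Fin m × Fin n) K)) := by
      rintro g ⟨ν, -, rfl⟩
      exact msSym_mem_adjoin K m n _ ν le_rfl
    exact Submodule.span_le.mpr hsub hspan
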